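/- Let C be the split Cayley algebra over a field F. Then every 2-local automorphism of C is an automorphism: 2LocAut(C) = Aut(C). -/

import Mathlib

open QuadraticMap

/-- **Theorem `th:2local_split`.** Every 2-local automorphism of the split
Cayley algebra (the Cayley algebra with isotropic norm) is an automorphism. -/
theorem split_cayley_two_local_aut_is_aut {F : Type*} [Field F] {C : Type*} [NonAssocRing C]
    [Module F C] [SMulCommClass F C C] [IsScalarTower F C C]
    (n : QuadraticForm F C)
    (hdim : Module.finrank F C = 8)
    (hcomp : ∀ x y : C, n (x * y) = n x * n y)
    (hnd : ∀ x : C, (∀ y : C, polar (⇑n) x y = 0) → x = 0)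
    (halt : ∀ x y : C, x * (x * y) = (x * x) * y ∧ (x * y) * y = x * (y * y))
    (hsplit : ∃ x : C, x ≠ 0 ∧ n x = 0)
    (φ : C → C)
    (h2loc : ∀ x y : C, ∃ ψ : C →ₗ[F] C,
      (Function.Bijective ψ ∧ ∀ a b : C, ψ (a * b) = ψ a * ψ b) ∧
      φ x = ψ x ∧ φ y = ψ y) :
    IsLinearMap F φ ∧ Function.Bijective φ ∧ ∀ x y : C, φ (x * y) = φ x * φ y := by
  classical
  have hfd : FiniteDimensional F C := FiniteDimensional.of_finrank_eq_succ hdim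
  have hBfin : 0 < Module.finrank F C := by rw [hdim]; norm_num
  haveI : Nonempty (Fin (Module.finrank F C)) := ⟨⟨0, hBfin⟩⟩
  set B : Module.Basis (Fin (Module.finrank F C)) F C := Module.finBasis F C with hB
  have hone : (1 : C) ≠ 0 := by
    intro h
    have hz : ∀ c : C, c = 0 := fun c => by rw [← mul_one c, h, mul_zero]
    exact B.ne_zero ⟨0, hBfin⟩ (hz _)
  -- expansion of the norm of a sum
  have hexp : ∀ x y : C, n (x + y) = n x + n y + polar (⇑n) x y := by
    intro x y; simp only [polar]; ring
  -- linearized composition law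
  have L1 : ∀ x y z : C, polar (⇑n) (x * y) (x * z) = n x * polar (⇑n) y z := by
    intro x y z
    simp only [polar]
    rw [← mul_add, hcomp, hcomp, hcomp]
    ring
  have L2 : ∀ w x y z : C, polar (⇑n) (x * y) (w * z) + polar (⇑n) (w * y) (x * z)
      = polar (⇑n) x w * polar (⇑n) y z := by
    intro w x y z
    have h := L1 (x + w) y z
    rw [add_mul, add_mul, polar_add_left, polar_add_right, polar_add_right, hexp x w] at h
    have hx := L1 x y z
    have hw := L1 w y z
    linear_combination h - hx - hw
  have L3 : ∀ x y z : C, polar (⇑n) (x * y) z + polar (⇑n) y (x * z)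
      = polar (⇑n) x 1 * polar (⇑n) y z := by
    intro x y z
    have h := L2 1 x y z
    rwa [one_mul, one_mul] at h
  -- Cayley-Hamilton identity
  have hCH : ∀ x : C, x * x = polar (⇑n) x 1 • x - n x • 1 := by
    intro x
    have key : ∀ w : C, polar (⇑n) (x * x - (polar (⇑n) x 1 • x - n x • 1)) w = 0 := by
      intro w
      rw [polar_sub_left, polar_sub_left, polar_smul_left, polar_smul_left,
        smul_eq_mul, smul_eq_mul]
      have h1 := L3 x x w
      have h2 := L1 x 1 w
      rw [mul_one] at h2
      linear_combination h1 - h2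
    exact sub_eq_zero.mp (hnd _ key)
  -- automorphisms fix 1
  have haut1 : ∀ ψ : C →ₗ[F] C, Function.Surjective ψ → (∀ a b : C, ψ (a * b) = ψ a * ψ b) →
      ψ 1 = 1 := by
    intro ψ hs hm
    have h : ∀ c : C, ψ 1 * c = c := by
      intro c; obtain ⟨a, rfl⟩ := hs c; rw [← hm, one_mul]
    have h1 := h 1
    rwa [mul_one] at h1
  -- automorphisms preserve trace and norm
  have hautn : ∀ ψ : C →ₗ[F] C, Function.Bijective ψ → (∀ a b : C, ψ (a * b) = ψ a * ψ b) →
      ∀ x : C, polar (⇑n) (ψ x) 1 = polar (⇑n) x 1 ∧ n (ψ x) = n x := by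
    intro ψ hbij hm x
    have hψ1 : ψ 1 = 1 := haut1 ψ hbij.2 hm
    set α : F := polar (⇑n) x 1 - polar (⇑n) (ψ x) 1 with hαdef
    set β : F := n x - n (ψ x) with hβdef
    have hkey : α • ψ x = β • (1 : C) := by
      have h1 : ψ (x * x) = polar (⇑n) x 1 • ψ x - n x • 1 := by
        rw [hCH x, _root_.map_sub, _root_.map_smul, _root_.map_smul, hψ1]
      have h2 : ψ x * ψ x = polar (⇑n) (ψ x) 1 • ψ x - n (ψ x) • 1 := hCH (ψ x)
      have h3 : polar (⇑n) x 1 • ψ x - n x • 1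
          = polar (⇑n) (ψ x) 1 • ψ x - n (ψ x) • 1 := by
        rw [← h1, hm, h2]
      rw [hαdef, hβdef, sub_smul, sub_smul]
      exact sub_eq_sub_iff_sub_eq_sub.mp h3
    by_cases hα : α = 0
    · have hβ0 : β = 0 := by
        have h0 : β • (1 : C) = 0 := by rw [← hkey, hα, zero_smul]
        rcases smul_eq_zero.mp h0 with h | h
        · exact h
        · exact absurd h hone
      constructor
      · have hα' : polar (⇑n) x 1 - polar (⇑n) (ψ x) 1 = 0 := by rw [← hαdef]; exact hα
        exact (sub_eq_zero.mp hα').symm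
      · have hβ' : n x - n (ψ x) = 0 := by rw [← hβdef]; exact hβ0
        exact (sub_eq_zero.mp hβ').symm
    · exfalso
      have hψx : ψ x = (α⁻¹ * β) • (1 : C) := by
        have h4 : α⁻¹ • (α • ψ x) = α⁻¹ • (β • (1 : C)) := by rw [hkey]
        rwa [smul_smul, inv_mul_cancel₀ hα, one_smul, smul_smul] at h4
      have h5 : ψ ((α⁻¹ * β) • (1 : C)) = (α⁻¹ * β) • (1 : C) := by rw [_root_.map_smul, hψ1]
      have h6 : x = (α⁻¹ * β) • (1 : C) := hbij.1 (by rw [h5]; exact hψx)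
      have h7 : ψ x = x := by rw [h6]; exact h5
      apply hα
      rw [hαdef, h7, sub_self]
  -- facts about φ
  have hφ1 : φ 1 = 1 := by
    obtain ⟨ψ, ⟨hbij, hm⟩, h1, _⟩ := h2loc 1 1
    rw [h1]; exact haut1 ψ hbij.2 hm
  have hφn : ∀ x : C, n (φ x) = n x := by
    intro x
    obtain ⟨ψ, ⟨hbij, hm⟩, h1, _⟩ := h2loc x x
    rw [h1]; exact (hautn ψ hbij hm x).2
  have hφp : ∀ x y : C, polar (⇑n) (φ x) (φ y) = polar (⇑n) x y := by
    intro x y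
    obtain ⟨ψ, ⟨hbij, hm⟩, h1, h2⟩ := h2loc x y
    rw [h1, h2]
    simp only [polar]
    rw [← _root_.map_add, (hautn ψ hbij hm (x + y)).2, (hautn ψ hbij hm x).2, (hautn ψ hbij hm y).2]
  have hφt : ∀ x : C, polar (⇑n) (φ x) 1 = polar (⇑n) x 1 := by
    intro x
    have h := hφp x 1
    rwa [hφ1] at h
  -- polar of a finite sum in the left argument
  have hpsum : ∀ (g : Fin (Module.finrank F C) → F) (u : Fin (Module.finrank F C) → C) (v : C),
      polar (⇑n) (∑ i, g i • u i) v = ∑ i, g i * polar (⇑n) (u i) v := by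
    intro g u v
    simp only [← QuadraticMap.polarBilin_apply_apply, _root_.map_sum, LinearMap.sum_apply, _root_.map_smul,
      LinearMap.smul_apply, smul_eq_mul]
  -- the images of the basis under φ are linearly independent
  have hφB_li : LinearIndependent F (fun i => φ (B i)) := by
    rw [Fintype.linearIndependent_iff]
    intro g hg i
    have hwz : ∀ z : C, polar (⇑n) (∑ j, g j • B j) z = 0 := by
      have hwBj : ∀ j, polar (⇑n) (∑ i, g i • B i) (B j) = 0 := by
        intro j
        rw [hpsum]
        have hc : ∀ i, g i * polar (⇑n) (B i) (B j) = g i * polar (⇑n) (φ (B i)) (φ (B j)) :=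
          fun i => by rw [hφp]
        rw [Finset.sum_congr rfl (fun i _ => hc i), ← hpsum, hg, polar_zero_left]
      intro z
      have hz : z ∈ Submodule.span F (Set.range ⇑B) := by rw [B.span_eq]; trivial
      induction hz using Submodule.span_induction with
      | mem v hv => obtain ⟨j, rfl⟩ := hv; exact hwBj j
      | zero => exact polar_zero_right _ _
      | add a b _ _ ha hb => rw [polar_add_right, ha, hb, add_zero]
      | smul c a _ ha => rw [polar_smul_right, ha, smul_zero]
    have hw0 : (∑ j, g j • B j) = 0 := hnd _ hwz
    exact Fintype.linearIndependent_iff.mp B.linearIndependent g hw0 i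
  have hφB_span : Submodule.span F (Set.range fun i => φ (B i)) = ⊤ :=
    hφB_li.span_eq_top_of_card_eq_finrank (by simp)
  -- nondegeneracy against the φ-image of the basis
  have hWnd : ∀ d : C, (∀ i, polar (⇑n) d (φ (B i)) = 0) → d = 0 := by
    intro d hd
    apply hnd
    intro z
    have hz : z ∈ Submodule.span F (Set.range fun i => φ (B i)) := by rw [hφB_span]; trivial
    induction hz using Submodule.span_induction with
    | mem v hv => obtain ⟨j, rfl⟩ := hv; exact hd j
    | zero => exact polar_zero_right _ _
    | add a b _ _ ha hb => rw [polar_add_right, ha, hb, add_zero]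
    | smul c a _ ha => rw [polar_smul_right, ha, smul_zero]
  -- φ is additive and homogeneous
  have hadd : ∀ x y : C, φ (x + y) = φ x + φ y := by
    intro x y
    have h : φ (x + y) - (φ x + φ y) = 0 := by
      apply hWnd
      intro i
      rw [polar_sub_left, polar_add_left, hφp, hφp, hφp, polar_add_left]
      ring
    exact sub_eq_zero.mp h
  have hsmul : ∀ (c : F) (x : C), φ (c • x) = c • φ x := by
    intro c x
    have h : φ (c • x) - c • φ x = 0 := by
      apply hWnd
      intro i
      rw [polar_sub_left, polar_smul_left, hφp, hφp, polar_smul_left]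
      simp only [smul_eq_mul]
      ring
    exact sub_eq_zero.mp h
  have hlin : IsLinearMap F φ := ⟨hadd, hsmul⟩
  have hφ0 : φ 0 = 0 := by
    have h := hsmul 0 0
    rwa [zero_smul, zero_smul] at h
  have hinj : Function.Injective φ := by
    intro a b hab
    have h : ∀ z : C, polar (⇑n) (a - b) z = 0 := by
      intro z
      rw [polar_sub_left, ← hφp a z, hab, hφp, sub_self]
    exact sub_eq_zero.mp (hnd _ h)
  have hsurj : Function.Surjective φ := by
    intro c
    have hc : c ∈ Submodule.span F (Set.range fun i => φ (B i)) := by rw [hφB_span]; trivial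
    induction hc using Submodule.span_induction with
    | mem v hv => obtain ⟨j, rfl⟩ := hv; exact ⟨B j, rfl⟩
    | zero => exact ⟨0, hφ0⟩
    | add a b _ _ ha hb =>
        obtain ⟨a', rfl⟩ := ha; obtain ⟨b', rfl⟩ := hb; exact ⟨a' + b', hadd a' b'⟩
    | smul c a _ ha => obtain ⟨a', rfl⟩ := ha; exact ⟨c • a', hsmul c a'⟩
  -- the spanning set of isotropic elements with nonzero trace
  have hisoP : ∀ z : C, n z = 0 →
      z ∈ Submodule.span F {x : C | n x = 0 ∧ polar (⇑n) x 1 ≠ 0} := by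
    intro z hz
    by_cases htz : polar (⇑n) z 1 = 0
    · by_cases hz0 : z = 0
      · rw [hz0]; exact Submodule.zero_mem _
      · obtain ⟨w, hwne⟩ : ∃ w, polar (⇑n) z w ≠ 0 := by
          by_contra h; push_neg at h; exact hz0 (hnd z h)
        have hp1 : n (z * w) = 0 := by rw [hcomp, hz, zero_mul]
        have hp2 : polar (⇑n) (z * w) 1 = -polar (⇑n) z w := by
          have h3 := L3 z w 1
          rw [mul_one] at h3
          rw [htz, zero_mul] at h3
          have h4 : polar (⇑n) (z * w) 1 = -polar (⇑n) w z := by linear_combination h3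
          rw [h4, polar_comm]
        have hzzw : polar (⇑n) z (z * w) = 0 := by
          have h4 := L1 z 1 w
          rw [mul_one] at h4
          rw [h4, hz, zero_mul]
        have hq1 : n (z + z * w) = 0 := by
          rw [hexp, hz, hp1, hzzw]; ring
        have hq2 : polar (⇑n) (z + z * w) 1 ≠ 0 := by
          rw [polar_add_left, htz, zero_add, hp2]
          simpa using hwne
        have hmem1 : (z + z * w) ∈ {x : C | n x = 0 ∧ polar (⇑n) x 1 ≠ 0} := ⟨hq1, hq2⟩
        have hmem2 : (z * w) ∈ {x : C | n x = 0 ∧ polar (⇑n) x 1 ≠ 0} :=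
          ⟨hp1, by rw [hp2]; simpa using hwne⟩
        have hzeq : z = (z + z * w) - z * w := by abel
        rw [hzeq]
        exact Submodule.sub_mem _ (Submodule.subset_span hmem1) (Submodule.subset_span hmem2)
    · exact Submodule.subset_span ⟨hz, htz⟩
  have hspanP : ∀ v : C, v ∈ Submodule.span F {x : C | n x = 0 ∧ polar (⇑n) x 1 ≠ 0} := by
    obtain ⟨z₀, hz₀ne, hz₀⟩ := hsplit
    obtain ⟨w₀, hw₀⟩ : ∃ w, polar (⇑n) z₀ w ≠ 0 := by
      by_contra h; push_neg at h; exact hz₀ne (hnd z₀ h)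
    obtain ⟨w, hz₀w⟩ : ∃ w, polar (⇑n) z₀ w = 1 :=
      ⟨(polar (⇑n) z₀ w₀)⁻¹ • w₀, by rw [polar_smul_right, smul_eq_mul, inv_mul_cancel₀ hw₀]⟩
    obtain ⟨z₁, hnz₁, hz₀z₁⟩ : ∃ z₁, n z₁ = 0 ∧ polar (⇑n) z₀ z₁ = 1 := by
      refine ⟨w - n w • z₀, ?_, ?_⟩
      · rw [sub_eq_add_neg, hexp, QuadraticMap.map_neg, QuadraticMap.map_smul,
          polar_neg_right, polar_smul_right]
        simp only [smul_eq_mul]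
        have hcomm : polar (⇑n) w z₀ = 1 := by rw [polar_comm]; exact hz₀w
        rw [hz₀, hcomm]
        ring
      · have hself : polar (⇑n) z₀ z₀ = 0 := by rw [polar_self, hz₀, smul_zero]
        rw [polar_sub_right, polar_smul_right, hz₀w, smul_eq_mul, hself]
        ring
    intro v
    obtain ⟨α, hαγ⟩ : ∃ α : F, α + polar (⇑n) v z₁ ≠ 0 := by
      by_cases h : polar (⇑n) v z₁ = 0
      · exact ⟨1, by rw [h, add_zero]; exact one_ne_zero⟩
      · exact ⟨0, by rwa [zero_add]⟩
    obtain ⟨β, hβmul⟩ : ∃ β : F,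
        β * (α + polar (⇑n) v z₁) = -(n v + α * polar (⇑n) v z₀) :=
      ⟨-(n v + α * polar (⇑n) v z₀) / (α + polar (⇑n) v z₁), div_mul_cancel₀ _ hαγ⟩
    have hziso : n (v + α • z₀ + β • z₁) = 0 := by
      rw [hexp, hexp, QuadraticMap.map_smul, QuadraticMap.map_smul, polar_smul_right,
        polar_smul_right, polar_add_left, polar_smul_left]
      simp only [smul_eq_mul]
      rw [hz₀, hnz₁, hz₀z₁]
      linear_combination hβmul
    have h1 := hisoP _ hziso
    have h2 := hisoP z₀ hz₀
    have h3 := hisoP z₁ hnz₁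
    have hveq : v = (v + α • z₀ + β • z₁) - α • z₀ - β • z₁ := by abel
    rw [hveq]
    exact Submodule.sub_mem _ (Submodule.sub_mem _ h1 (Submodule.smul_mem _ _ h2))
      (Submodule.smul_mem _ _ h3)
  -- final assembly
  refine ⟨hlin, ⟨hinj, hsurj⟩, ?_⟩
  intro x y
  have hx := hspanP x
  induction hx using Submodule.span_induction with
  | mem p hp =>
      obtain ⟨hnp, htp⟩ := hp
      set t : F := polar (⇑n) p 1 with htdef
      have ht0 : t ≠ 0 := htp
      have hQn : n (φ p) = 0 := by rw [hφn, hnp]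
      have hQt : polar (⇑n) (φ p) 1 = t := hφt p
      have hQQ : φ p * φ p = t • φ p := by
        rw [hCH (φ p), hQn, hQt, zero_smul, sub_zero]
      obtain ⟨ρ, ⟨hρbij, hρm⟩, hρx, hρxy⟩ := h2loc p (p * y)
      have hstep1 : φ (p * y) = φ p * ρ y := by rw [hρxy, hρm, ← hρx]
      have hstar : φ p * φ (p * y) = t • φ (p * y) := by
        rw [hstep1, (halt (φ p) (ρ y)).1, hQQ, smul_mul_assoc]
      obtain ⟨ρ', ⟨hρ'bij, hρ'm⟩, hρ'x, hρ'w⟩ := h2loc p (y - t⁻¹ • (p * y))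
      have hE : φ y - t⁻¹ • φ (p * y) = ρ' y - t⁻¹ • (φ p * ρ' y) := by
        have lhs : φ (y - t⁻¹ • (p * y)) = φ y - t⁻¹ • φ (p * y) := by
          rw [hlin.map_sub, hsmul]
        rw [← lhs, hρ'w, _root_.map_sub, _root_.map_smul, hρ'm, ← hρ'x]
      have hmul0 : φ p * φ y - t⁻¹ • (φ p * φ (p * y)) = 0 := by
        have h := congrArg (fun m => φ p * m) hE
        rw [mul_sub, mul_sub, mul_smul_comm, mul_smul_comm] at h
        rw [h, (halt (φ p) (ρ' y)).1, hQQ, smul_mul_assoc, smul_smul,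
          inv_mul_cancel₀ ht0, one_smul, sub_self]
      have hfin : φ p * φ y = t⁻¹ • (φ p * φ (p * y)) := by rwa [sub_eq_zero] at hmul0
      rw [hfin, hstar, smul_smul, inv_mul_cancel₀ ht0, one_smul]
  | zero => rw [zero_mul, hφ0, zero_mul]
  | add a b _ _ iha ihb => rw [add_mul, hadd, iha, ihb, hadd, add_mul]
  | smul c a _ ih => rw [smul_mul_assoc, hsmul, ih, hsmul, smul_mul_assoc]
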